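/- Let a = (f_1,...,f_n) and b = (g_1,...,g_m) be tuples of nonnegative continuous functions on X. If a ≼ b in the dynamical subequivalence sense, then Diag(f_1,...,f_n) ≾ Diag(g_1,...,g_m) in the Cuntz subequivalence sense in the reduced crossed product C*-algebra C(X) ⋊_r G. -/

import Mathlib

open scoped Pointwise NNReal ENNReal

variable {X : Type*} [TopologicalSpace X] {G : Type*} [Group G] [MulAction G X]

/-- The open support of a continuous `ℝ≥0`-valued function. -/
def osupp (f : C(X, ℝ≥0)) : Set X := {x | f x ≠ 0}

/-- Dynamical subequivalence `A ≼ B` for two finite tuples (lists) of subsets of `X`. -/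
def SetSubeq (G : Type*) [Group G] [MulAction G X] (A B : List (Set X)) : Prop :=
  ∀ F : Fin A.length → Set X,
    (∀ i, IsClosed (F i) ∧ F i ⊆ A.get i) →
    ∃ (J : Fin A.length → ℕ)
      (U : (i : Fin A.length) → Fin (J i) → Set X)
      (s : (i : Fin A.length) → Fin (J i) → G)
      (k : (i : Fin A.length) → Fin (J i) → Fin B.length),
      (∀ i j, IsOpen (U i j)) ∧
      (∀ i, F i ⊆ ⋃ j, U i j) ∧
      (∀ i j, (s i j) • U i j ⊆ B.get (k i j)) ∧
      (∀ (p q : Σ i : Fin A.length, Fin (J i)), p ≠ q → k p.1 p.2 = k q.1 q.2 →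
        Disjoint ((s p.1 p.2) • U p.1 p.2) ((s q.1 q.2) • U q.1 q.2))

/-- Dynamical subequivalence `a ≼ b` for tuples of nonnegative continuous functions. -/
def DynSubeq (G : Type*) [Group G] [MulAction G X] (a b : List C(X, ℝ≥0)) : Prop :=
  SetSubeq G (a.map osupp) (b.map osupp)

/-- The entrywise cut-down `(f - ε)₊`. -/
noncomputable def cutFun (f : C(X, ℝ≥0)) (ε : ℝ≥0) : C(X, ℝ≥0) :=
  ⟨fun x => f x - ε, f.continuous.sub continuous_const⟩

noncomputable def cutList (a : List C(X, ℝ≥0)) (ε : ℝ≥0) : List C(X, ℝ≥0) := a.map (cutFun · ε)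

/-- Membership in the algebra of sets generated by the open sets of `X`. -/
def InAlg (X : Type*) [TopologicalSpace X] (s : Set X) : Prop :=
  s ∈ MeasureTheory.generateSetAlgebra {t : Set X | IsOpen t}

/-- A `G`-invariant regular premeasure on the algebra generated by the open sets. -/
structure InvRegPremeasure (X : Type*) [TopologicalSpace X] (G : Type*) [Group G]
    [MulAction G X] where
  m : Set X → ℝ≥0∞
  junk : ∀ s : Set X, ¬ InAlg X s → m s = 0
  empty' : m ∅ = 0
  countably_additive : ∀ A : ℕ → Set X, (∀ n, InAlg X (A n)) →
    Pairwise (Function.onFun Disjoint A) → InAlg X (⋃ n, A n) →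
    m (⋃ n, A n) = ∑' n, m (A n)
  invariant : ∀ (g : G) (s : Set X), InAlg X s → m (g • s) = m s
  inner_regular : ∀ s : Set X, InAlg X s →
    m s = ⨆ (F : Set X) (_ : IsCompact F ∧ F ⊆ s), m F
  outer_regular : ∀ s : Set X, InAlg X s →
    m s = ⨅ (O : Set X) (_ : IsOpen O ∧ s ⊆ O), m O

/-- A state on the generalized type semigroup `W(X, G)`, described at the level of
`K(X, G)`: a function on tuples which is monotone for `≼`, additive for concatenation,
and vanishes on the empty tuple. -/
structure DynState (X : Type*) [TopologicalSpace X] (G : Type*) [Group G]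
    [MulAction G X] where
  toFun : List C(X, ℝ≥0) → ℝ≥0∞
  mono : ∀ a b, DynSubeq G a b → toFun a ≤ toFun b
  additive : ∀ a b, toFun (a ++ b) = toFun a + toFun b
  zero' : toFun [] = 0

/-- Lower semicontinuity of a state. -/
def DynState.LSC (D : DynState X G) : Prop :=
  ∀ a, D.toFun a = ⨆ (ε : ℝ≥0) (_ : 0 < ε), D.toFun (cutList a ε)

/-- The complexification of a nonnegative continuous function. -/
noncomputable def toComplex {X : Type*} [TopologicalSpace X] (f : C(X, ℝ≥0)) : C(X, ℂ) :=
  ⟨fun x => ((f x : ℝ) : ℂ),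
    Complex.continuous_ofReal.comp (NNReal.continuous_coe.comp f.continuous)⟩

/-- Cuntz subequivalence for matrices over a C*-algebra `A`:
`x ≾ y` iff there are `rₖ` with `rₖ* y rₖ → x`. -/
def CuntzSubeq {A : Type*} [NormedRing A] [StarRing A] [CStarRing A] [NormedAlgebra ℂ A]
    {n m : ℕ} (x : Matrix (Fin n) (Fin n) A) (y : Matrix (Fin m) (Fin m) A) : Prop :=
  ∃ r : ℕ → Matrix (Fin m) (Fin n) A,
    Filter.Tendsto (fun k => (Matrix.conjTranspose (r k)) * y * r k) Filter.atTop (nhds x)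


section CuntzHelpers

open Filter

variable {X : Type*} [TopologicalSpace X]

theorem my_contr [CompactSpace X]
    {A : Type*} [NormedRing A] [StarRing A] [CStarRing A] [NormedAlgebra ℂ A]
    [CompleteSpace A] (π : C(X, ℂ) →⋆ₐ[ℂ] A) (w : C(X, ℂ)) (hw : star w = w) :
    ‖π w‖ ≤ ‖w‖ := by
  rcases isEmpty_or_nonempty X with hX | hX
  · have : w = 0 := by ext x; exact absurd (Nonempty.intro x) (not_nonempty_iff.mpr hX)
    simp [this]
  · have hws : IsSelfAdjoint (π w) := by rw [IsSelfAdjoint, ← map_star, hw]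
    have h1 : spectralRadius ℂ (π w) = (‖π w‖₊ : ℝ≥0∞) := by
      refine tendsto_nhds_unique ?_
        (tendsto_const_nhds (f := Filter.atTop (α := ℕ)) (x := (‖π w‖₊ : ℝ≥0∞)))
      convert (spectrum.pow_nnnorm_pow_one_div_tendsto_nhds_spectralRadius (π w)).comp
        (tendsto_pow_atTop_atTop_of_one_lt (α := ℕ) one_lt_two) using 1
      refine funext fun n => ?_
      rw [Function.comp_apply, hws.nnnorm_pow_two_pow, ENNReal.coe_pow, ← ENNReal.rpow_natCast,
        ← ENNReal.rpow_mul]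
      simp
    have h2 : spectralRadius ℂ (π w) ≤ spectralRadius ℂ w :=
      iSup_le_iSup_of_subset (AlgHom.spectrum_apply_subset (π : C(X,ℂ) →ₐ[ℂ] A) w)
    have h3 : spectralRadius ℂ w ≤ (‖w‖₊ : ℝ≥0∞) := spectrum.spectralRadius_le_nnnorm (𝕜 := ℂ) w
    have := h1 ▸ (h2.trans h3)
    exact_mod_cast this

theorem toComplex_mul (a b : C(X, ℝ≥0)) : toComplex (a * b) = toComplex a * toComplex b := by
  ext x; simp [toComplex]

theorem toComplex_add (a b : C(X, ℝ≥0)) : toComplex (a + b) = toComplex a + toComplex b := by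
  ext x; simp [toComplex]

theorem star_toComplex (a : C(X, ℝ≥0)) : star (toComplex a) = toComplex a := by
  ext x; simp [toComplex, Complex.conj_ofReal]

/-- `toComplex` as an additive monoid homomorphism. -/
noncomputable def toComplexHom : C(X, ℝ≥0) →+ C(X, ℂ) where
  toFun := toComplex
  map_zero' := by ext x; simp [toComplex]
  map_add' := toComplex_add

theorem toComplex_sum {ι : Type*} (s : Finset ι) (v : ι → C(X, ℝ≥0)) :
    toComplex (∑ j ∈ s, v j) = ∑ j ∈ s, toComplex (v j) :=
  map_sum toComplexHom v s

theorem toComplex_zero : toComplex (0 : C(X, ℝ≥0)) = 0 := map_zero (toComplexHom (X := X))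

theorem exists_pos_le_on {K : Set X} (hK : IsCompact K) (g : C(X, ℝ≥0))
    (h : ∀ x ∈ K, g x ≠ 0) : ∃ δ : ℝ≥0, 0 < δ ∧ ∀ x ∈ K, δ ≤ g x := by
  rcases K.eq_empty_or_nonempty with rfl | hne
  · exact ⟨1, one_pos, by simp⟩
  · obtain ⟨z, hz, hmin⟩ := hK.exists_isMinOn hne g.continuous.continuousOn
    exact ⟨g z, pos_iff_ne_zero.mpr (h z hz), fun x hx => hmin hx⟩

end CuntzHelpers

/-- **Proposition 2.3.** If `a ≼ b` dynamically, then the corresponding diagonal matrices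
are Cuntz subequivalent in (any covariant representation of, e.g. the reduced crossed
product) `C(X) ⋊_r G`: here `A` is a C*-algebra, `π : C(X) → A` a unital `*`-homomorphism,
and `u : G → A` unitaries implementing the action. -/
theorem dynSubeq_implies_cuntzSubeq {X : Type*} [TopologicalSpace X] [CompactSpace X]
    [T2Space X] {G : Type*} [Group G] [MulAction G X]
    (hG : ∀ g : G, Continuous fun x : X => g • x)
    {A : Type*} [NormedRing A] [StarRing A] [CStarRing A] [NormedAlgebra ℂ A]
    [CompleteSpace A]
    (π : C(X, ℂ) →⋆ₐ[ℂ] A) (hπ : Function.Injective π)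
    (u : G → Aˣ) (hu : ∀ g : G, ((u g)⁻¹ : Aˣ) = (star (u g : A) : A))
    (hcov : ∀ (g : G) (f : C(X, ℂ)),
      (u g : A) * π f * ((u g)⁻¹ : Aˣ) =
        π ⟨fun x => f (g⁻¹ • x), f.continuous.comp (hG g⁻¹)⟩)
    {n m : ℕ} (f : Fin n → C(X, ℝ≥0)) (g : Fin m → C(X, ℝ≥0))
    (hab : DynSubeq G (List.ofFn f) (List.ofFn g)) :
    CuntzSubeq (Matrix.diagonal fun i => π (toComplex (f i)))
      (Matrix.diagonal fun j => π (toComplex (g j))) := by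
  classical
  have key : ∀ ε : ℝ≥0, 0 < ε → ∃ r : Matrix (Fin m) (Fin n) A,
      ∀ i i' : Fin n, ‖(Matrix.conjTranspose r *
          (Matrix.diagonal fun j => π (toComplex (g j))) * r) i i'
        - (Matrix.diagonal fun i => π (toComplex (f i))) i i'‖ ≤ (ε : ℝ) := by
    intro ε hε
    have hab' : SetSubeq G (List.ofFn fun i => osupp (f i)) (List.ofFn fun j => osupp (g j)) := by
      simpa [DynSubeq, List.map_ofFn, Function.comp_def] using hab
    have ha : (List.ofFn fun i => osupp (f i)).length = n := List.length_ofFn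
    have hb : (List.ofFn fun j => osupp (g j)).length = m := List.length_ofFn
    set F : Fin (List.ofFn fun i => osupp (f i)).length → Set X :=
      fun i => {x | ε ≤ f (Fin.cast ha i) x} with hFdef
    have hF : ∀ i, IsClosed (F i) ∧ F i ⊆ (List.ofFn fun i => osupp (f i)).get i := by
      intro i
      constructor
      · exact isClosed_Ici.preimage (map_continuous (f (Fin.cast ha i)))
      · rw [List.get_ofFn]
        intro x hx
        exact (hε.trans_le hx).ne'
    obtain ⟨J, U, s, k, hUo, hFU, hsU, hdisj⟩ := hab' F hF
    -- reindex to Fin n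
    choose φ hφ using fun i : Fin n =>
      PartitionOfUnity.exists_isSubordinate (X := X)
        ((hF (Fin.cast ha.symm i)).1) (U (Fin.cast ha.symm i))
        (hUo (Fin.cast ha.symm i)) (hFU (Fin.cast ha.symm i))
    -- abbreviations
    set J' : Fin n → ℕ := fun i => J (Fin.cast ha.symm i) with hJ'
    set sf : (i : Fin n) → Fin (J' i) → G := fun i j => s (Fin.cast ha.symm i) j with hsf
    set kf : (i : Fin n) → Fin (J' i) → Fin m := fun i j => Fin.cast hb (k (Fin.cast ha.symm i) j)
      with hkf
    -- ℝ≥0-valued partition functions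
    set h' : (i : Fin n) → Fin (J' i) → C(X, ℝ≥0) := fun i j =>
      ⟨fun x => Real.toNNReal (φ i j x), continuous_real_toNNReal.comp (φ i j).continuous⟩ with hh'
    set v : (i : Fin n) → Fin (J' i) → C(X, ℝ≥0) := fun i j => h' i j * f i with hv
    set θ : (i : Fin n) → Fin (J' i) → C(X, ℝ≥0) := fun i j =>
      (v i j).comp ⟨fun y => (sf i j)⁻¹ • y, hG _⟩ with hθ
    -- support facts
    have hsupp_v_U : ∀ i j (x : X), v i j x ≠ 0 → x ∈ U (Fin.cast ha.symm i) j := by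
      intro i j x hx
      have : φ i j x ≠ 0 := by
        intro h0
        apply hx
        simp [hv, hh', h0]
      exact hφ i j (subset_closure this)
    have hsupp_v_U' : ∀ i j, tsupport (v i j : X → ℝ≥0) ⊆ U (Fin.cast ha.symm i) j := by
      intro i j
      refine (closure_minimal ?_ ?_).trans ((hφ i) j)
      · intro x hx
        have : φ i j x ≠ 0 := by
          intro h0
          apply hx
          simp [hv, hh', h0]
        exact subset_closure this
      · exact isClosed_closure
    -- the compact sets
    set K : (i : Fin n) → Fin (J' i) → Set X := fun i j =>
      (fun y => sf i j • y) '' tsupport (v i j : X → ℝ≥0) with hK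
    have hKc : ∀ i j, IsCompact (K i j) := fun i j =>
      ((isClosed_tsupport _).isCompact).image (hG _)
    have hKU : ∀ i j, K i j ⊆ sf i j • U (Fin.cast ha.symm i) j := by
      intro i j y hy
      obtain ⟨x, hx, rfl⟩ := hy
      exact Set.smul_mem_smul_set (hsupp_v_U' i j hx)
    have hUB : ∀ i j (y : X), y ∈ sf i j • U (Fin.cast ha.symm i) j → g (kf i j) y ≠ 0 := by
      intro i j y hy
      have h2 := hsU (Fin.cast ha.symm i) j hy
      rw [List.get_ofFn] at h2
      exact h2
    have hKg : ∀ i j (y : X), y ∈ K i j → g (kf i j) y ≠ 0 := fun i j y hy =>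
      hUB i j y (hKU i j hy)
    choose δ hδpos hδle using fun i j => exists_pos_le_on (hKc i j) (g (kf i j)) (hKg i j)
    -- the functions q
    have hden : ∀ i j (y : X), NNReal.sqrt (max (g (kf i j) y) (δ i j)) ≠ 0 := by
      intro i j y
      exact ne_of_gt (NNReal.sqrt_pos.mpr (lt_max_of_lt_right (hδpos i j)))
    set q : (i : Fin n) → Fin (J' i) → C(X, ℝ≥0) := fun i j =>
      ⟨fun y => NNReal.sqrt (θ i j y) / NNReal.sqrt (max (g (kf i j) y) (δ i j)),
        Continuous.div₀ (NNReal.continuous_sqrt.comp (θ i j).continuous)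
          (NNReal.continuous_sqrt.comp ((map_continuous (g (kf i j))).max continuous_const))
          (fun y => hden i j y)⟩ with hq
    -- q is supported in s • U
    have hqU : ∀ i j (y : X), q i j y ≠ 0 → y ∈ sf i j • U (Fin.cast ha.symm i) j := by
      intro i j y hy
      have hθy : θ i j y ≠ 0 := by
        intro h0
        apply hy
        simp [hq, h0]
      have hv' : v i j ((sf i j)⁻¹ • y) ≠ 0 := hθy
      have := hsupp_v_U i j _ hv'
      exact ⟨_, this, smul_inv_smul _ y⟩
    -- key pointwise identity
    have hq2 : ∀ i j (y : X), q i j y * g (kf i j) y * q i j y = θ i j y := by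
      intro i j y
      rcases eq_or_ne (θ i j y) 0 with h0 | h0
      · simp [hq, h0]
      · have hyK : y ∈ K i j := by
          refine ⟨(sf i j)⁻¹ • y, subset_closure h0, smul_inv_smul _ y⟩
        have hgy : δ i j ≤ g (kf i j) y := hδle i j y hyK
        have hmax : max (g (kf i j) y) (δ i j) = g (kf i j) y := max_eq_left hgy
        have hgne : g (kf i j) y ≠ 0 := hKg i j y hyK
        simp only [hq, ContinuousMap.coe_mk, hmax]
        rw [div_mul_eq_mul_div, div_mul_div_comm, NNReal.mul_self_sqrt,
          show NNReal.sqrt (θ i j y) * g (kf i j) y * NNReal.sqrt (θ i j y)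
            = NNReal.sqrt (θ i j y) * NNReal.sqrt (θ i j y) * g (kf i j) y by ring,
          NNReal.mul_self_sqrt]
        exact mul_div_cancel_right₀ _ hgne
    -- orthogonality of the q's
    have horth : ∀ (i i' : Fin n) (j : Fin (J' i)) (j' : Fin (J' i')),
        (⟨Fin.cast ha.symm i, j⟩ : Σ i₀, Fin (J i₀)) ≠ ⟨Fin.cast ha.symm i', j'⟩ →
        kf i' j' = kf i j →
        q i j * g (kf i j) * q i' j' = 0 := by
      intro i i' j j' hne hkk
      have hkk' : k (Fin.cast ha.symm i) j = k (Fin.cast ha.symm i') j' := by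
        have : (kf i j : ℕ) = (kf i' j' : ℕ) := congrArg Fin.val hkk.symm
        exact Fin.ext this
      have hdis := hdisj ⟨Fin.cast ha.symm i, j⟩ ⟨Fin.cast ha.symm i', j'⟩ hne hkk'
      ext y
      simp only [ContinuousMap.mul_apply, ContinuousMap.zero_apply]
      rcases eq_or_ne (q i j y) 0 with h0 | h0
      · rw [h0, zero_mul, zero_mul]
      rcases eq_or_ne (q i' j' y) 0 with h0' | h0'
      · rw [h0', mul_zero]
      exact absurd (hqU i' j' y h0') (Set.disjoint_left.mp hdis (hqU i j y h0))
    -- covariance consequence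
    have hconj : ∀ (i : Fin n) (j : Fin (J' i)),
        star (u (sf i j) : A) * π (toComplex (θ i j)) * (u (sf i j) : A)
          = π (toComplex (v i j)) := by
      intro i j
      have hco := hcov (sf i j) (toComplex (v i j))
      have hθv : π (⟨fun x => toComplex (v i j) ((sf i j)⁻¹ • x),
          (toComplex (v i j)).continuous.comp (hG (sf i j)⁻¹)⟩ : C(X, ℂ))
          = π (toComplex (θ i j)) := rfl
      rw [hθv] at hco
      rw [← hu, ← hco]
      simp [mul_assoc, Units.inv_mul_cancel_left, Units.inv_mul]
    -- the matrix r
    set r : Matrix (Fin m) (Fin n) A := Matrix.of fun k' i =>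
      ∑ j : Fin (J' i), if kf i j = k' then π (toComplex (q i j)) * (u (sf i j) : A) else 0
      with hr
    refine ⟨r, ?_⟩
    intro i i'
    have hstar : ∀ (k' : Fin m) (i : Fin n), star (r k' i)
        = ∑ j : Fin (J' i), if kf i j = k'
            then star (u (sf i j) : A) * π (toComplex (q i j)) else 0 := by
      intro k' i
      show star (∑ j : Fin (J' i), if kf i j = k'
          then π (toComplex (q i j)) * (u (sf i j) : A) else 0) = _
      rw [star_sum]
      refine Finset.sum_congr rfl fun j _ => ?_
      split
      · rw [star_mul, ← map_star, star_toComplex]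
      · exact star_zero _
    have hentry : (Matrix.conjTranspose r * (Matrix.diagonal fun j => π (toComplex (g j))) * r) i i'
        = ∑ j : Fin (J' i), ∑ j' : Fin (J' i'),
            if kf i' j' = kf i j then
              (star (u (sf i j) : A) * π (toComplex (q i j)))
              * π (toComplex (g (kf i j)))
              * (π (toComplex (q i' j')) * (u (sf i' j') : A))
            else 0 := by
      rw [Matrix.mul_apply]
      have step1 : ∀ k' : Fin m,
          (Matrix.conjTranspose r * (Matrix.diagonal fun j => π (toComplex (g j)))) i k' * r k' i'
          = ∑ j : Fin (J' i), ∑ j' : Fin (J' i'),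
              if kf i j = k' then (if kf i' j' = k' then
                (star (u (sf i j) : A) * π (toComplex (q i j)))
                * π (toComplex (g k'))
                * (π (toComplex (q i' j')) * (u (sf i' j') : A)) else 0)
              else 0 := by
        intro k'
        rw [Matrix.mul_diagonal, Matrix.conjTranspose_apply, hstar]
        show (_ * _) * (∑ j' : Fin (J' i'), if kf i' j' = k'
            then π (toComplex (q i' j')) * (u (sf i' j') : A) else 0) = _
        rw [Finset.sum_mul, Finset.sum_mul]
        refine Finset.sum_congr rfl fun j _ => ?_
        rw [Finset.mul_sum]
        refine Finset.sum_congr rfl fun j' _ => ?_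
        rcases eq_or_ne (kf i j) k' with h1 | h1 <;> rcases eq_or_ne (kf i' j') k' with h2 | h2 <;>
          simp [h1, h2, mul_assoc]
      rw [Finset.sum_congr rfl fun k' _ => step1 k']
      rw [Finset.sum_comm]
      refine Finset.sum_congr rfl fun j _ => ?_
      rw [Finset.sum_comm]
      refine Finset.sum_congr rfl fun j' _ => ?_
      rw [Finset.sum_ite_eq Finset.univ (kf i j)]
      simp only [Finset.mem_univ, if_true]
    -- vanishing of cross terms
    have hcross : ∀ (i i' : Fin n) (j : Fin (J' i)) (j' : Fin (J' i')),
        (⟨Fin.cast ha.symm i, j⟩ : Σ i₀, Fin (J i₀)) ≠ ⟨Fin.cast ha.symm i', j'⟩ →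
        kf i' j' = kf i j →
        (star (u (sf i j) : A) * π (toComplex (q i j)))
          * π (toComplex (g (kf i j)))
          * (π (toComplex (q i' j')) * (u (sf i' j') : A)) = 0 := by
      intro i i' j j' hne hkk
      have hz : π (toComplex (q i j)) * π (toComplex (g (kf i j))) * π (toComplex (q i' j')) = 0 := by
        rw [← map_mul, ← map_mul, ← toComplex_mul, ← toComplex_mul, horth i i' j j' hne hkk,
          toComplex_zero, map_zero]
      calc (star (u (sf i j) : A) * π (toComplex (q i j)))
            * π (toComplex (g (kf i j)))
            * (π (toComplex (q i' j')) * (u (sf i' j') : A))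
          = star (u (sf i j) : A)
            * (π (toComplex (q i j)) * π (toComplex (g (kf i j))) * π (toComplex (q i' j')))
            * (u (sf i' j') : A) := by noncomm_ring
        _ = 0 := by rw [hz, mul_zero, zero_mul]
    rcases eq_or_ne i i' with rfl | hii
    · -- diagonal entry
      have hqq : ∀ j : Fin (J' i), q i j * g (kf i j) * q i j = θ i j := fun j =>
        ContinuousMap.ext (hq2 i j)
      have hdiag : (Matrix.conjTranspose r * (Matrix.diagonal fun j => π (toComplex (g j))) * r) i i
          = π (toComplex (∑ j : Fin (J' i), v i j)) := by
        rw [hentry, toComplex_sum, map_sum]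
        refine Finset.sum_congr rfl fun j _ => ?_
        rw [Finset.sum_eq_single j]
        · rw [if_pos rfl]
          calc (star (u (sf i j) : A) * π (toComplex (q i j)))
                * π (toComplex (g (kf i j)))
                * (π (toComplex (q i j)) * (u (sf i j) : A))
              = star (u (sf i j) : A)
                * (π (toComplex (q i j)) * π (toComplex (g (kf i j))) * π (toComplex (q i j)))
                * (u (sf i j) : A) := by noncomm_ring
            _ = star (u (sf i j) : A) * π (toComplex (θ i j)) * (u (sf i j) : A) := by
                rw [← map_mul, ← map_mul, ← toComplex_mul, ← toComplex_mul, hqq]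
            _ = π (toComplex (v i j)) := hconj i j
        · intro j' _ hj'
          split
          · rename_i hkk
            refine hcross i i j j' ?_ hkk
            intro hco
            exact hj' (eq_of_heq (Sigma.mk.inj_iff.mp hco).2).symm
          · rfl
        · intro hj; exact absurd (Finset.mem_univ j) hj
      rw [hdiag, Matrix.diagonal_apply_eq]
      have hsum : (∑ j : Fin (J' i), v i j) = (∑ j : Fin (J' i), h' i j) * f i := by
        rw [Finset.sum_mul]
      rw [hsum, ← map_sub]
      have hstarw : star (toComplex ((∑ j : Fin (J' i), h' i j) * f i) - toComplex (f i))
          = toComplex ((∑ j : Fin (J' i), h' i j) * f i) - toComplex (f i) := by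
        rw [star_sub, star_toComplex, star_toComplex]
      refine (my_contr π _ hstarw).trans ?_
      rw [ContinuousMap.norm_le _ ε.coe_nonneg]
      intro x
      have hφsum_le : ∑ j : Fin (J' i), ((φ i) j) x ≤ 1 := by
        rw [← finsum_eq_sum_of_fintype]; exact (φ i).sum_le_one x
      have hcoe : (((∑ j : Fin (J' i), h' i j) x : ℝ≥0) : ℝ) = ∑ j : Fin (J' i), ((φ i) j) x := by
        rw [ContinuousMap.sum_apply, NNReal.coe_sum]
        exact Finset.sum_congr rfl fun j _ => Real.coe_toNNReal _ ((φ i).nonneg j x)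
      set a : ℝ := ((∑ j : Fin (J' i), h' i j) x : ℝ) with hadef
      set b : ℝ := ((f i x : ℝ≥0) : ℝ) with hbdef
      have ha1 : a ≤ 1 := by rw [hcoe]; exact hφsum_le
      have ha0 : 0 ≤ a := by rw [hadef]; exact NNReal.coe_nonneg _
      have hb0 : 0 ≤ b := by rw [hbdef]; exact NNReal.coe_nonneg _
      have hval : ‖(toComplex ((∑ j : Fin (J' i), h' i j) * f i) - toComplex (f i)) x‖
          = |a * b - b| := by
        simp only [ContinuousMap.sub_apply, toComplex, ContinuousMap.coe_mk,
          ContinuousMap.mul_apply, NNReal.coe_mul]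
        rw [← Complex.ofReal_sub, Complex.norm_real]
        rfl
      rw [hval]
      rcases le_or_gt ε (f i x) with hc | hc
      · have hmem : x ∈ F (Fin.cast ha.symm i) := hc
        have : ∑ j : Fin (J' i), ((φ i) j) x = 1 := by
          rw [← finsum_eq_sum_of_fintype]; exact (φ i).sum_eq_one hmem
        have ha : a = 1 := by rw [hcoe, this]
        rw [ha, one_mul, sub_self, abs_zero]
        exact ε.coe_nonneg
      · have hab : a * b ≤ b := by nlinarith
        have : |a * b - b| = b - a * b := by rw [abs_of_nonpos (by linarith)]; ring
        rw [this]
        have hbε : b ≤ (ε : ℝ) := le_of_lt hc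
        nlinarith
    · -- off-diagonal entry
      have hoff : (Matrix.conjTranspose r * (Matrix.diagonal fun j => π (toComplex (g j))) * r) i i'
          = 0 := by
        rw [hentry]
        refine Finset.sum_eq_zero fun j _ => Finset.sum_eq_zero fun j' _ => ?_
        split
        · rename_i hkk
          refine hcross i i' j j' ?_ hkk
          intro hco
          refine hii (Fin.ext ?_)
          have h1 : (Fin.cast ha.symm i : Fin _) = Fin.cast ha.symm i' :=
            congrArg Sigma.fst hco
          simpa using congrArg Fin.val h1
        · rfl
      rw [hoff, Matrix.diagonal_apply_ne _ hii]
      simp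
  choose R hR using fun N : ℕ => key ((N + 1 : ℝ≥0))⁻¹ (by positivity)
  refine ⟨R, ?_⟩
  refine tendsto_pi_nhds.mpr ?_
  intro i
  rw [tendsto_pi_nhds]
  intro i'
  have h0 : Filter.Tendsto (fun N : ℕ => (1 : ℝ) / (N + 1)) Filter.atTop (nhds 0) :=
    tendsto_one_div_add_atTop_nhds_zero_nat
  have hsq : Filter.Tendsto (fun N : ℕ =>
      (Matrix.conjTranspose (R N) * (Matrix.diagonal fun j => π (toComplex (g j))) * R N) i i'
        - (Matrix.diagonal fun i => π (toComplex (f i))) i i') Filter.atTop (nhds 0) := by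
    refine squeeze_zero_norm (fun N => ?_) h0
    refine (hR N i i').trans (le_of_eq ?_)
    push_cast
    rw [one_div]
  have := hsq.add_const ((Matrix.diagonal fun i => π (toComplex (f i))) i i')
  simpa using this
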